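/- If y(s) = Φ^s(y₀) lies in a compact invariant set where F_r ≥ F_m > 0, and w₀ = G(y₀) with G(y) = ∫₀^∞ exp((α−1)∫₀^{s₁} F_r(Φ^{-s₂}(y)) ds₂) ds₁, then the solution of dw/ds = 1 + (α−1)F_r(y(s))w with w(0)=w₀ satisfies w(s) = G(y(s)) for all s ≥ 0; i.e., the graph w = G(y) is invariant. -/

import Mathlib

open Real MeasureTheory intervalIntegral Set

/-- Invariance of the synchronization graph `w = G(y)`: if `y₀` lies in a compact
invariant set where `F_r ≥ F_m > 0`, `G` is the convergent improper integral, and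
`w` solves `dw/ds = 1 + (α−1)F_r(Φ^s y₀)w` with `w(0) = G(y₀)`, then
`w(s) = G(Φ^s y₀)` for all `s ≥ 0`. -/
theorem stmt_9 {d : ℕ} (α : ℝ) (hα : α < 1)
    (Φ : ℝ → EuclideanSpace ℝ (Fin d) → EuclideanSpace ℝ (Fin d))
    (hΦcont : Continuous fun p : ℝ × EuclideanSpace ℝ (Fin d) => Φ p.1 p.2)
    (hΦ0 : ∀ y, Φ 0 y = y)
    (hΦadd : ∀ s t : ℝ, ∀ y, Φ (s + t) y = Φ s (Φ t y))
    (Fr : EuclideanSpace ℝ (Fin d) → ℝ) (hFr : Continuous Fr)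
    (A : Set (EuclideanSpace ℝ (Fin d))) (hA : IsCompact A)
    (hinv : ∀ s : ℝ, ∀ y ∈ A, Φ s y ∈ A)
    (Fm : ℝ) (hFm : 0 < Fm) (hlow : ∀ y ∈ A, Fm ≤ Fr y)
    (G : EuclideanSpace ℝ (Fin d) → ℝ)
    (hG : ∀ y ∈ A, G y = ∫ s₁ in Ici (0:ℝ),
        Real.exp ((α - 1) * ∫ s₂ in (0:ℝ)..s₁, Fr (Φ (-s₂) y)))
    (y₀ : EuclideanSpace ℝ (Fin d)) (hy₀ : y₀ ∈ A)
    (w : ℝ → ℝ) (hw0 : w 0 = G y₀)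
    (hw : ∀ s : ℝ, HasDerivAt w (1 + (α - 1) * Fr (Φ s y₀) * w s) s) :
    ∀ s : ℝ, 0 ≤ s → w s = G (Φ s y₀) := by
  have hα1 : (0:ℝ) < 1 - α := by linarith
  have hycont : Continuous fun u : ℝ => Φ u y₀ :=
    hΦcont.comp (continuous_id.prodMk continuous_const)
  have hfc : Continuous fun u : ℝ => Fr (Φ u y₀) := hFr.comp hycont
  set h : ℝ → ℝ := fun t => ∫ u in (0:ℝ)..t, Fr (Φ u y₀) with hhdef
  have hh' : ∀ t, HasDerivAt h (Fr (Φ t y₀)) t := fun t =>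
    (hfc.integral_hasStrictDerivAt 0 t).hasDerivAt
  have hhdiff : Differentiable ℝ h := fun t => (hh' t).differentiableAt
  have hhcont : Continuous h := hhdiff.continuous
  have hmem : ∀ u : ℝ, Φ u y₀ ∈ A := fun u => hinv u y₀ hy₀
  have hbound : ∀ u : ℝ, u ≤ 0 → h u ≤ Fm * u := by
    intro u hu
    have hmono : ∫ _t in u..(0:ℝ), Fm ≤ ∫ t in u..(0:ℝ), Fr (Φ t y₀) :=
      intervalIntegral.integral_mono_on hu intervalIntegrable_const
        (hfc.intervalIntegrable u 0) fun x _ => hlow _ (hmem x)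
    rw [intervalIntegral.integral_const, smul_eq_mul] at hmono
    have hsymm : h u = -∫ t in u..(0:ℝ), Fr (Φ t y₀) := by
      rw [hhdef]; exact intervalIntegral.integral_symm u 0
    nlinarith [hmono, hsymm]
  set F : ℝ → ℝ := fun u => Real.exp ((1 - α) * h u) with hFdef
  have hFcont : Continuous F := Real.continuous_exp.comp (continuous_const.mul hhcont)
  have hFint : ∀ s : ℝ, IntegrableOn F (Iic s) := by
    intro s
    have hb : (0:ℝ) < (1 - α) * Fm := by positivity
    have h1 : IntegrableOn (fun x : ℝ => Real.exp (-((1 - α) * Fm) * x)) (Ioi (0:ℝ)) :=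
      exp_neg_integrableOn_Ioi 0 hb
    have h2 := (MeasurePreserving.integrableOn_comp_preimage
      (Measure.measurePreserving_neg (volume : Measure ℝ))
      (Homeomorph.neg ℝ).measurableEmbedding).2 h1
    have hpre : (Neg.neg ⁻¹' Ioi (0:ℝ) : Set ℝ) = Iio 0 := by
      ext x; simp
    rw [hpre] at h2
    simp only [Function.comp_def, neg_mul_neg] at h2
    have hdom : IntegrableOn (fun u : ℝ => Real.exp ((1 - α) * Fm * u)) (Iic 0) :=
      h2.congr_set_ae Iio_ae_eq_Iic.symm
    have hIic0 : IntegrableOn F (Iic 0) := by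
      refine hdom.mono' (hFcont.aestronglyMeasurable.restrict) ?_
      rw [ae_restrict_iff' measurableSet_Iic]
      refine Filter.Eventually.of_forall fun u hu => ?_
      have h3 : (1 - α) * h u ≤ (1 - α) * Fm * u := by
        have := hbound u hu
        nlinarith
      simp only [hFdef, Real.norm_eq_abs, abs_of_pos (Real.exp_pos _)]
      exact Real.exp_le_exp.2 h3
    have hsub : Iic s ⊆ Iic 0 ∪ Icc 0 s := by
      intro x hx
      rcases le_or_gt x 0 with hx0 | hx0
      · exact Or.inl hx0
      · exact Or.inr ⟨hx0.le, hx⟩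
    exact (hIic0.union (hFcont.integrableOn_Icc)).mono_set hsub
  set I : ℝ → ℝ := fun s => ∫ u in Iic s, F u with hIdef
  have hIeq : ∀ t : ℝ, I t = I 0 + ∫ u in (0:ℝ)..t, F u := by
    intro t
    have := integral_Iic_sub_Iic (hFint 0) (hFint t)
    rw [hIdef]
    linarith [this]
  have hIdiff : ∀ s, HasDerivAt I (F s) s := by
    intro s
    have hd : HasDerivAt (fun t => I 0 + ∫ u in (0:ℝ)..t, F u) (F s) s :=
      ((hFcont.integral_hasStrictDerivAt 0 s).hasDerivAt).const_add (I 0)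
    exact hd.congr_of_eventuallyEq (Filter.Eventually.of_forall hIeq)
  have hGkey : ∀ s : ℝ, G (Φ s y₀) = Real.exp ((α - 1) * h s) * I s := by
    intro s
    rw [hG _ (hmem s)]
    have hcomp : ∀ s₂ : ℝ, Fr (Φ (-s₂) (Φ s y₀)) = Fr (Φ (s - s₂) y₀) := by
      intro s₂; rw [show s - s₂ = -s₂ + s from by ring, hΦadd]
    have inner : ∀ s₁ : ℝ,
        (∫ s₂ in (0:ℝ)..s₁, Fr (Φ (-s₂) (Φ s y₀))) = h s - h (s - s₁) := by
      intro s₁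
      simp_rw [hcomp]
      rw [intervalIntegral.integral_comp_sub_left (fun x => Fr (Φ x y₀)) s, sub_zero]
      have hadj := intervalIntegral.integral_add_adjacent_intervals (μ := volume)
        (hfc.intervalIntegrable 0 (s - s₁)) (hfc.intervalIntegrable (s - s₁) s)
      rw [hhdef]
      linarith [hadj]
    calc (∫ s₁ in Ici (0:ℝ), Real.exp ((α - 1) * ∫ s₂ in (0:ℝ)..s₁, Fr (Φ (-s₂) (Φ s y₀))))
        = ∫ s₁ in Ici (0:ℝ), Real.exp ((α - 1) * h s) * F (s - s₁) := by
          refine setIntegral_congr_fun measurableSet_Ici fun s₁ _ => ?_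
          rw [inner s₁]
          simp only [hFdef, ← Real.exp_add]
          ring_nf
      _ = Real.exp ((α - 1) * h s) * ∫ s₁ in Ici (0:ℝ), F (s - s₁) := by
          rw [MeasureTheory.integral_const_mul]
      _ = Real.exp ((α - 1) * h s) * I s := by
          congr 1
          have hmp : MeasurePreserving (fun t : ℝ => s - t) volume volume :=
            Measure.measurePreserving_sub_left volume s
          have hemb : MeasurableEmbedding (fun t : ℝ => s - t) :=
            (MeasurableEquiv.subLeft s).measurableEmbedding
          have hkey := hmp.setIntegral_preimage_emb hemb F (Iic s)
          have hpre : (fun t : ℝ => s - t) ⁻¹' Iic s = Ici 0 := by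
            ext x; simp [sub_le_self_iff]
          rw [hpre] at hkey
          rw [hIdef]
          exact hkey
  set g : ℝ → ℝ := fun t => Real.exp ((α - 1) * h t) * I t with hgdef
  have hgderiv : ∀ s, HasDerivAt g (1 + (α - 1) * Fr (Φ s y₀) * g s) s := by
    intro s
    have h1 : HasDerivAt (fun t => Real.exp ((α - 1) * h t))
        (Real.exp ((α - 1) * h s) * ((α - 1) * Fr (Φ s y₀))) s :=
      ((hh' s).const_mul (α - 1)).exp
    have h2 := hIdiff s
    have h3 : Real.exp ((α - 1) * h s) * F s = 1 := by
      simp only [hFdef, ← Real.exp_add]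
      rw [show (α - 1) * h s + (1 - α) * h s = 0 from by ring, Real.exp_zero]
    have := h1.mul h2
    convert this using 1
    · rfl
    · rfl
    · rfl
    rw [hgdef]
    simp only
    linear_combination -h3
  have hv : ∀ s, HasDerivAt (fun t => (w t - g t) * Real.exp (-((α - 1) * h t))) 0 s := by
    intro s
    have hwg : HasDerivAt (fun t => w t - g t) ((α - 1) * Fr (Φ s y₀) * (w s - g s)) s := by
      have := (hw s).sub (hgderiv s)
      convert this using 1
      · rfl
      · rfl
      · rfl
      ring
    have he : HasDerivAt (fun t => Real.exp (-((α - 1) * h t)))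
        (Real.exp (-((α - 1) * h s)) * (-((α - 1) * Fr (Φ s y₀)))) s :=
      (((hh' s).const_mul (α - 1)).neg).exp
    have := hwg.mul he
    convert this using 1
    · rfl
    · rfl
    · rfl
    ring
  have hconst : ∀ s : ℝ, (w s - g s) * Real.exp (-((α - 1) * h s))
      = (w 0 - g 0) * Real.exp (-((α - 1) * h 0)) := fun s =>
    is_const_of_deriv_eq_zero (fun t => (hv t).differentiableAt)
      (fun t => (hv t).deriv) s 0
  have hg0 : g 0 = G y₀ := by
    have := hGkey 0
    rw [hΦ0] at this
    rw [hgdef]; exact this.symm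
  intro s _hs
  have hcs := hconst s
  rw [hw0, hg0, sub_self, zero_mul] at hcs
  have hexp := Real.exp_pos (-((α - 1) * h s))
  have hws : w s = g s := by
    rcases mul_eq_zero.1 hcs with h0 | h0
    · linarith
    · exact absurd h0 (ne_of_gt hexp)
  rw [hws, hGkey s]
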